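/- Let p : [0, T] → [0, p_max] be Lebesgue integrable with ∫₀^T p(τ)dτ = E > 0, and suppose ∫₀^T log₂(1+p(τ))dτ = K·E where K ∈ [K_min, K_max), K_min = log₂(1+p_max)/p_max, K_max = 1/ln 2. Then T ≥ E/p^e(K), where p^e(K) is the unique positive solution of K·p = log₂(1+p), with equality if and only if p(t) = p^e(K) for almost every t ∈ [0, T]. -/

import Mathlib

open MeasureTheory

lemma aux_tangent (pe : ℝ) (hpe : 0 < pe) (x : ℝ) (hx : 0 ≤ x) :
    Real.log (1 + x) ≤ Real.log (1 + pe) + (x - pe) / (1 + pe) ∧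
      (Real.log (1 + x) = Real.log (1 + pe) + (x - pe) / (1 + pe) ↔ x = pe) := by
  have h1x : (0:ℝ) < 1 + x := by linarith
  have h1pe : (0:ℝ) < 1 + pe := by linarith
  set y := (1 + x) / (1 + pe) with hy
  have hypos : 0 < y := div_pos h1x h1pe
  have hlogy : Real.log y = Real.log (1 + x) - Real.log (1 + pe) :=
    Real.log_div (ne_of_gt h1x) (ne_of_gt h1pe)
  have hy1 : y - 1 = (x - pe) / (1 + pe) := by
    rw [hy, div_sub_one (ne_of_gt h1pe)]
    ring_nf
  have hle : Real.log y ≤ y - 1 := Real.log_le_sub_one_of_pos hypos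
  constructor
  · rw [hlogy, hy1] at hle; linarith
  · constructor
    · intro heq
      by_contra hne
      have hyne : y ≠ 1 := by
        intro h
        apply hne
        have : 1 + x = 1 + pe := by
          rw [hy, div_eq_one_iff_eq (ne_of_gt h1pe)] at h; linarith
        linarith
      have := Real.log_lt_sub_one_of_pos hypos hyne
      rw [hlogy, hy1] at this
      linarith
    · intro h; subst h; simp

theorem time_optimality_RPE (T pmax E K pe : ℝ) (hT : 0 ≤ T) (hpmax : 0 < pmax)
    (hE : 0 < E)
    (hKmin : Real.logb 2 (1 + pmax) / pmax ≤ K) (hKmax : K < 1 / Real.log 2)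
    (hpe_pos : 0 < pe) (hpe : K * pe = Real.logb 2 (1 + pe))
    (p : ℝ → ℝ)
    (hbound : ∀ t ∈ Set.Icc 0 T, p t ∈ Set.Icc 0 pmax)
    (hint : IntegrableOn p (Set.Icc 0 T))
    (henergy : ∫ t in Set.Icc 0 T, p t = E)
    (hdata : ∫ t in Set.Icc 0 T, Real.logb 2 (1 + p t) = K * E) :
    E / pe ≤ T ∧
      (T = E / pe ↔ ∀ᵐ t ∂(volume.restrict (Set.Icc 0 T)), p t = pe) := by
  have hlog2 : (0:ℝ) < Real.log 2 := Real.log_pos (by norm_num)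
  have h1pe : (0:ℝ) < 1 + pe := by linarith
  set c : ℝ := 1 / ((1 + pe) * Real.log 2) with hc
  have hcpos : 0 < c := by positivity
  -- pointwise tangent inequality in logb form
  have key : ∀ x : ℝ, 0 ≤ x →
      Real.logb 2 (1 + x) ≤ K * pe + (x - pe) * c ∧
        (Real.logb 2 (1 + x) = K * pe + (x - pe) * c ↔ x = pe) := by
    intro x hx
    obtain ⟨hle, heq⟩ := aux_tangent pe hpe_pos x hx
    have hKpe : K * pe = Real.log (1 + pe) / Real.log 2 := by
      rw [hpe, Real.logb, Real.log_div_log]  -- may need adjust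
    have hform : K * pe + (x - pe) * c
        = (Real.log (1 + pe) + (x - pe) / (1 + pe)) / Real.log 2 := by
      rw [hKpe, hc]; field_simp
    rw [Real.logb, hform]
    constructor
    · exact div_le_div_of_nonneg_right hle hlog2.le
    · rw [div_eq_div_iff (by positivity) (by positivity)] at *
      constructor
      · intro h
        exact heq.mp (mul_right_cancel₀ (ne_of_gt hlog2) h)
      · intro h; rw [heq.mpr h]
  -- K > c
  have hKc : c < K := by
    obtain ⟨hle, heq⟩ := key 0 le_rfl
    have hne : (0:ℝ) ≠ pe := ne_of_lt hpe_pos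
    have hstrict : Real.logb 2 (1 + 0) < K * pe + (0 - pe) * c := by
      rcases lt_or_eq_of_le hle with h | h
      · exact h
      · exact absurd (heq.mp h) hne
    simp at hstrict
    have : c * pe < K * pe := by linarith
    exact lt_of_mul_lt_mul_right this (le_of_lt hpe_pos)
  -- define g
  set g : ℝ → ℝ := fun t => K * pe + (p t - pe) * c - Real.logb 2 (1 + p t) with hg
  have hmeas : MeasurableSet (Set.Icc (0:ℝ) T) := measurableSet_Icc
  have hvol : (volume (Set.Icc (0:ℝ) T)) = ENNReal.ofReal T := by
    rw [Real.volume_Icc]; simp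
  have hvolfin : volume (Set.Icc (0:ℝ) T) ≠ ⊤ := by rw [hvol]; exact ENNReal.ofReal_ne_top
  -- integrability of logb term
  have hlogb_int : IntegrableOn (fun t => Real.logb 2 (1 + p t)) (Set.Icc 0 T) := by
    have ham : AEStronglyMeasurable (fun t => Real.logb 2 (1 + p t))
        (volume.restrict (Set.Icc 0 T)) := by
      have : AEMeasurable p (volume.restrict (Set.Icc 0 T)) := hint.aemeasurable
      exact ((Real.measurable_log.comp_aemeasurable
        (aemeasurable_const.add this)).div_const (Real.log 2)).aestronglyMeasurable
    apply Integrable.mono' (g := fun _ => Real.logb 2 (1 + pmax))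
      ((integrableOn_const_iff).mpr (Or.inr hvolfin.lt_top)) ham
    filter_upwards [ae_restrict_mem hmeas] with t ht
    obtain ⟨h0, h1⟩ := hbound t ht
    rw [Real.norm_eq_abs, abs_of_nonneg (Real.logb_nonneg (by norm_num) (by linarith))]
    exact Real.logb_le_logb_of_le (by norm_num) (by linarith) (by linarith)
  have hconst_int : ∀ a : ℝ, IntegrableOn (fun _ : ℝ => a) (Set.Icc 0 T) :=
    fun a => (integrableOn_const_iff).mpr (Or.inr hvolfin.lt_top)
  have hg_int : IntegrableOn g (Set.Icc 0 T) := by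
    apply Integrable.sub _ hlogb_int
    exact (hconst_int (K * pe)).add (((hint.sub (hconst_int pe)).mul_const c))
  -- integral of g
  have hTvol : (volume (Set.Icc (0:ℝ) T)).toReal = T := by
    rw [hvol, ENNReal.toReal_ofReal hT]
  have hconst_eval : ∀ a : ℝ, (∫ _ in Set.Icc (0:ℝ) T, a) = T * a := by
    intro a; rw [setIntegral_const, measureReal_def, hTvol, smul_eq_mul]
  have hgint_eval : (∫ t in Set.Icc 0 T, g t) = (K - c) * (pe * T - E) := by
    have hA : IntegrableOn (fun t => K * pe + (p t - pe) * c) (Set.Icc 0 T) :=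
      (hconst_int _).add ((hint.sub (hconst_int pe)).mul_const c)
    calc (∫ t in Set.Icc 0 T, g t)
        = (∫ t in Set.Icc 0 T, (K * pe + (p t - pe) * c))
            - ∫ t in Set.Icc 0 T, Real.logb 2 (1 + p t) := integral_sub hA hlogb_int
      _ = ((∫ _ in Set.Icc (0:ℝ) T, (K * pe - pe * c))
            + ∫ t in Set.Icc 0 T, p t * c) - K * E := by
          rw [hdata]; congr 1
          rw [← integral_add (hconst_int _) (hint.mul_const c)]
          exact integral_congr_ae (Filter.Eventually.of_forall (fun t => by ring))
      _ = (K - c) * (pe * T - E) := by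
          rw [hconst_eval, integral_mul_const, henergy]; ring
  have hg_nonneg : ∀ t ∈ Set.Icc (0:ℝ) T, 0 ≤ g t := by
    intro t ht
    have := (key (p t) (hbound t ht).1).1
    simp [hg]; linarith
  have hint_nonneg : 0 ≤ (K - c) * (pe * T - E) := by
    rw [← hgint_eval]
    exact setIntegral_nonneg hmeas hg_nonneg
  have hEpeT : E ≤ pe * T := by
    nlinarith [hKc]
  refine ⟨by rw [div_le_iff₀ hpe_pos]; linarith, ?_⟩
  constructor
  · intro hTeq
    have hzero : (∫ t in Set.Icc 0 T, g t) = 0 := by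
      rw [hgint_eval, hTeq]; field_simp; ring
    have hg0 : g =ᵐ[volume.restrict (Set.Icc 0 T)] 0 := by
      rw [← integral_eq_zero_iff_of_nonneg_ae _ hg_int]
      · exact hzero
      · filter_upwards [ae_restrict_mem hmeas] with t ht using hg_nonneg t ht
    filter_upwards [hg0, ae_restrict_mem hmeas] with t ht0 htmem
    have : Real.logb 2 (1 + p t) = K * pe + (p t - pe) * c := by
      simp [hg] at ht0; linarith
    exact (key (p t) (hbound t htmem).1).2.mp this
  · intro hae
    have hpeT : pe * T = E := by
      have : (∫ t in Set.Icc 0 T, p t) = ∫ _ in Set.Icc (0:ℝ) T, pe := by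
        apply integral_congr_ae
        filter_upwards [hae] with t ht using ht
      rw [henergy, hconst_eval] at this
      linarith
    field_simp [ne_of_gt hpe_pos]
    linarith
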